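/- Let d ≥ 1, η > 0, let K be a nonempty closed convex subset of ℝ^d, let y ∈ ℝ^d, let p be the metric projection of y onto K (p ∈ K and ‖y − p‖ ≤ ‖y − x‖ for all x ∈ K), and let x̂ ∈ K satisfy ‖x̂ − y‖²/(2η) ≤ ‖p − y‖²/(2η) + 1/d. Define P1(x) = (1/(2η))·(‖x − p‖² + ‖p − y‖²) and P2(x) = (1/(2η))·(‖x − x̂‖² + ‖x̂ − y‖² − 2·√(2η/d)·(‖x − x̂‖ + ‖x̂ − y‖) − 12η/d). Then P1(x) ≥ P2(x) for every x ∈ ℝ^d. -/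

import Mathlib

open RealInnerProductSpace

set_option maxHeartbeats 1000000 in
theorem stmt_7 (d : ℕ) (hd : 1 ≤ d) (η : ℝ) (hη : 0 < η)
    (K : Set (EuclideanSpace ℝ (Fin d))) (hKne : K.Nonempty) (hKcl : IsClosed K)
    (hKconv : Convex ℝ K) (y p xhat : EuclideanSpace ℝ (Fin d))
    (hpK : p ∈ K) (hproj : ∀ x ∈ K, ‖y - p‖ ≤ ‖y - x‖) (hxhatK : xhat ∈ K)
    (hxhat : ‖xhat - y‖ ^ 2 / (2 * η) ≤ ‖p - y‖ ^ 2 / (2 * η) + 1 / d) :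
    ∀ x : EuclideanSpace ℝ (Fin d),
      (1 / (2 * η)) * (‖x - p‖ ^ 2 + ‖p - y‖ ^ 2) ≥
        (1 / (2 * η)) * (‖x - xhat‖ ^ 2 + ‖xhat - y‖ ^ 2 -
          2 * Real.sqrt (2 * η / d) * (‖x - xhat‖ + ‖xhat - y‖) - 12 * η / d) := by
  have hd0 : (0 : ℝ) < d := by exact_mod_cast Nat.lt_of_lt_of_le Nat.zero_lt_one hd
  have h2η : (0 : ℝ) < 2 * η := by linarith
  -- Step 1: ⟪y - p, xhat - p⟫ ≤ 0
  have hinner : (inner ℝ (y - p) (xhat - p) : ℝ) ≤ 0 := by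
    by_contra h
    push_neg at h
    set c := (inner ℝ (y - p) (xhat - p) : ℝ) with hc
    have hε0 : 0 < ‖xhat - p‖ := by
      rcases eq_or_lt_of_le (norm_nonneg (xhat - p)) with h0 | h0
      · exfalso
        have : xhat - p = 0 := by
          rw [← norm_eq_zero]; exact h0.symm
        rw [hc, this, inner_zero_right] at h
        exact lt_irrefl 0 h
      · exact h0
    set e := ‖xhat - p‖ with he
    set t := min 1 (c / e ^ 2) with ht
    have ht0 : 0 < t := lt_min one_pos (div_pos h (by positivity))
    have ht1 : t ≤ 1 := min_le_left _ _
    have htc : t ≤ c / e ^ 2 := min_le_right _ _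
    have hz : (1 - t) • p + t • xhat ∈ K :=
      hKconv hpK hxhatK (by linarith) (le_of_lt ht0) (by ring)
    have hle := hproj _ hz
    have hrw : y - ((1 - t) • p + t • xhat) = (y - p) - t • (xhat - p) := by
      module
    rw [hrw] at hle
    have hexp : ‖(y - p) - t • (xhat - p)‖ ^ 2
        = ‖y - p‖ ^ 2 - 2 * (t * c) + t ^ 2 * e ^ 2 := by
      rw [norm_sub_sq_real, real_inner_smul_right, norm_smul]
      simp [abs_of_pos ht0, hc, he]
      ring
    have hsq : ‖y - p‖ ^ 2 ≤ ‖(y - p) - t • (xhat - p)‖ ^ 2 := by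
      apply sq_le_sq' <;> nlinarith [norm_nonneg (y - p), norm_nonneg ((y - p) - t • (xhat - p))]
    rw [hexp] at hsq
    have hte : t * e ^ 2 ≤ c := by
      rw [div_le_iff₀ (by positivity)] at *
      calc t * e ^ 2 ≤ (c / e ^ 2) * e ^ 2 := by
            apply mul_le_mul_of_nonneg_right htc (by positivity)
        _ = c := by field_simp
    nlinarith [mul_pos ht0 h]
  -- Step 2: ‖xhat - p‖ ^ 2 ≤ ‖y - xhat‖ ^ 2 - ‖y - p‖ ^ 2
  have hpyth : ‖xhat - p‖ ^ 2 ≤ ‖y - xhat‖ ^ 2 - ‖y - p‖ ^ 2 := by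
    have hrw : y - xhat = (y - p) - (xhat - p) := by module
    have hexp : ‖y - xhat‖ ^ 2
        = ‖y - p‖ ^ 2 - 2 * (inner ℝ (y - p) (xhat - p) : ℝ) + ‖xhat - p‖ ^ 2 := by
      rw [hrw, norm_sub_sq_real]
    rw [hexp]
    linarith
  -- Step 3: B² ≤ A² + 2η/d
  have hB2 : ‖xhat - y‖ ^ 2 ≤ ‖p - y‖ ^ 2 + 2 * η / d := by
    have := hxhat
    rw [div_le_iff₀ h2η] at this
    calc ‖xhat - y‖ ^ 2 = ‖xhat - y‖ ^ 2 / (2 * η) * (2 * η) := by field_simp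
      _ ≤ (‖p - y‖ ^ 2 / (2 * η) + 1 / d) * (2 * η) := by
          apply mul_le_mul_of_nonneg_right hxhat (le_of_lt h2η)
      _ = ‖p - y‖ ^ 2 + 2 * η / d := by field_simp
  -- Step 4: ε ≤ s
  set s := Real.sqrt (2 * η / d) with hs
  have hs0 : 0 ≤ s := Real.sqrt_nonneg _
  have hs2 : s ^ 2 = 2 * η / d := Real.sq_sqrt (by positivity)
  have hεs : ‖xhat - p‖ ≤ s := by
    have h1 : ‖xhat - p‖ ^ 2 ≤ s ^ 2 := by
      rw [hs2]
      have e1 : ‖y - xhat‖ = ‖xhat - y‖ := norm_sub_rev _ _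
      have e2 : ‖y - p‖ = ‖p - y‖ := norm_sub_rev _ _
      rw [e1, e2] at hpyth
      linarith
    calc ‖xhat - p‖ = Real.sqrt (‖xhat - p‖ ^ 2) := (Real.sqrt_sq (norm_nonneg _)).symm
      _ ≤ Real.sqrt (s ^ 2) := Real.sqrt_le_sqrt h1
      _ = s := Real.sqrt_sq hs0
  intro x
  set a := ‖x - p‖ with ha
  set b := ‖x - xhat‖ with hb
  set A := ‖p - y‖ with hA
  set B := ‖xhat - y‖ with hBd
  have ha0 : 0 ≤ a := norm_nonneg _
  have hb0 : 0 ≤ b := norm_nonneg _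
  have hB0 : 0 ≤ B := norm_nonneg _
  have htri1 : b ≤ a + s := by
    calc b ≤ ‖x - p‖ + ‖p - xhat‖ := by
          rw [hb]; exact norm_sub_le_norm_sub_add_norm_sub x p xhat
      _ = a + ‖xhat - p‖ := by rw [norm_sub_rev p xhat]
      _ ≤ a + s := by linarith
  have htri2 : a ≤ b + s := by
    calc a ≤ ‖x - xhat‖ + ‖xhat - p‖ := by
          rw [ha]; exact norm_sub_le_norm_sub_add_norm_sub x xhat p
      _ ≤ b + s := by linarith
  rw [ge_iff_le]
  apply mul_le_mul_of_nonneg_left _ (by positivity)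
  have h12 : 12 * η / (d : ℝ) = 6 * s ^ 2 := by rw [hs2]; ring
  rw [sub_le_iff_le_add] at *
  rw [← sub_le_iff_le_add]
  rw [h12]
  nlinarith [mul_nonneg hs0 hs0, mul_nonneg hs0 hB0,
    mul_nonneg (by linarith : (0:ℝ) ≤ a + s - b) (by linarith : (0:ℝ) ≤ a + s + b),
    mul_nonneg hs0 (by linarith : (0:ℝ) ≤ b + s - a), hB2]
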